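/- Let n ≥ 2, ω = exp(2πi/n), and let A, B ∈ Mₙ(ℂ) be such that A is normal, the operator norm of B on Euclidean ℂⁿ equals 1, and {(x,y,z) ∈ ℂ³ : det(x·A + y·B + z·AB − I) = 0} = {(x,y,z) ∈ ℂ³ : xⁿ + yⁿ + (−1)^{n−1} zⁿ = 1}. Let e₀,…,e_{n−1} and ζ₀,…,ζ_{n−1} be orthonormal bases of ℂⁿ with A e_j = ω^j e_j and B ζ_j = ω^j ζ_j for j = 0,…,n−1. Then |⟨e_r, ζ_j⟩| = 1/√n for all 0 ≤ r, j ≤ n−1; consequently the matrix C with entries C_{rj} = √n·⟨e_r, ζ_j⟩ is a complex Hadamard matrix (all entries unimodular and C Cᴴ = n·I). -/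

import Mathlib

open Matrix Complex

noncomputable section

open Polynomial Finset

private lemma aux_charpoly_eval {n : ℕ} (N : Matrix (Fin n) (Fin n) ℂ) (x : ℂ) :
    N.charpoly.eval x = (x • (1 : Matrix (Fin n) (Fin n) ℂ) - N).det := by
  rw [Matrix.charpoly, ← Polynomial.coe_evalRingHom, RingHom.map_det]
  congr 1
  ext i u
  by_cases h : i = u
  · subst h
    simp [Matrix.charmatrix_apply_eq, Matrix.one_apply]
  · simp [Matrix.charmatrix_apply_ne _ _ _ h, Matrix.one_apply_ne h]

private lemma aux_deg_Xn (n : ℕ) (hn : 0 < n) : (X ^ n - 1 : ℂ[X]).natDegree = n := by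
  have h : (X ^ n - 1 : ℂ[X]) = X ^ n - C 1 := by norm_num
  rw [h, natDegree_X_pow_sub_C]

private lemma aux_eq_X_pow_sub_one {n : ℕ} (hn : 0 < n) {ω : ℂ} (hprim : IsPrimitiveRoot ω n)
    (p : ℂ[X]) (hm : p.Monic) (hdeg : p.natDegree = n)
    (hev : ∀ i : Fin n, p.eval (ω ^ (i : ℕ)) = 0) :
    p = X ^ n - 1 := by
  have hq : (X ^ n - 1 : ℂ[X]).Monic := by
    have h : (X ^ n - 1 : ℂ[X]) = X ^ n - C 1 := by norm_num
    rw [h]; exact monic_X_pow_sub_C 1 hn.ne'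
  have hinj : Function.Injective (fun i : Fin n => ω ^ (i : ℕ)) := by
    intro a b h
    exact Fin.ext (hprim.pow_inj a.isLt b.isLt h)
  have hδ : p - (X ^ n - 1) = 0 := by
    rcases eq_or_ne (p - (X ^ n - 1)) 0 with h0 | h0
    · exact h0
    apply Polynomial.eq_zero_of_natDegree_lt_card_of_eval_eq_zero _ hinj
    · intro i
      have h1 : (ω ^ (i : ℕ)) ^ n = 1 := by
        rw [← pow_mul, mul_comm, pow_mul, hprim.pow_eq_one, one_pow]
      simp [hev i, h1]
    · rw [Fintype.card_fin]
      have hdd : p.degree = (X ^ n - 1 : ℂ[X]).degree := by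
        rw [degree_eq_natDegree hm.ne_zero, degree_eq_natDegree hq.ne_zero, hdeg,
          aux_deg_Xn n hn]
      have hlt : (p - (X ^ n - 1)).degree < p.degree :=
        degree_sub_lt hdd hm.ne_zero (by rw [hm.leadingCoeff, hq.leadingCoeff])
      rw [degree_eq_natDegree hm.ne_zero, hdeg] at hlt
      exact (natDegree_lt_iff_degree_lt h0).mpr hlt
  exact sub_eq_zero.mp hδ

private lemma aux_prod_X_sub {n : ℕ} (hn : 0 < n) {ω : ℂ} (hprim : IsPrimitiveRoot ω n) :
    (∏ i : Fin n, (X - C (ω ^ (i : ℕ))) : ℂ[X]) = X ^ n - 1 := by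
  apply aux_eq_X_pow_sub_one hn hprim
  · exact monic_prod_of_monic _ _ fun i _ => monic_X_sub_C _
  · rw [natDegree_prod _ _ fun i _ => X_sub_C_ne_zero _]
    simp only [natDegree_X_sub_C]
    simp
  · intro i
    rw [eval_prod]
    exact Finset.prod_eq_zero (Finset.mem_univ i) (by simp)

private lemma aux_prod_erase {n : ℕ} (hn : 0 < n) {ω : ℂ} (hprim : IsPrimitiveRoot ω n)
    (j : Fin n) :
    (∏ i ∈ Finset.univ.erase j, (ω ^ (j : ℕ) - ω ^ (i : ℕ))) = n * (ω ^ (j : ℕ)) ^ (n - 1) := by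
  set c : ℂ := ω ^ (j : ℕ) with hc
  set q : ℂ[X] := ∏ i ∈ Finset.univ.erase j, (X - C (ω ^ (i : ℕ))) with hq
  have hcn : c ^ n = 1 := by
    rw [hc, ← pow_mul, mul_comm, pow_mul, hprim.pow_eq_one, one_pow]
  have h1 : q * (X - C c) = X ^ n - 1 := by
    have h0 := Finset.mul_prod_erase Finset.univ
      (fun i : Fin n => X - C (ω ^ (i : ℕ))) (Finset.mem_univ j)
    rw [mul_comm, hq, hc, ← aux_prod_X_sub hn hprim]
    exact h0
  have h2 : (∑ i ∈ Finset.range n, X ^ i * (C c) ^ (n - 1 - i)) * (X - C c) = X ^ n - 1 := by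
    rw [geom_sum₂_mul, ← map_pow, hcn, Polynomial.C_1]
  have h3 : q = ∑ i ∈ Finset.range n, X ^ i * (C c) ^ (n - 1 - i) :=
    mul_right_cancel₀ (X_sub_C_ne_zero c) (h1.trans h2.symm)
  have h4 := congrArg (eval c) h3
  rw [eval_prod] at h4
  simp only [eval_sub, eval_X, eval_C] at h4
  rw [h4, eval_finset_sum]
  have h5 : ∀ i ∈ Finset.range n, eval c (X ^ i * (C c) ^ (n - 1 - i)) = c ^ (n - 1) := by
    intro i hi
    rw [eval_mul, eval_pow, eval_X, eval_pow, eval_C, ← pow_add]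
    congr 1
    have := Finset.mem_range.mp hi
    omega
  rw [Finset.sum_congr rfl h5, Finset.sum_const, Finset.card_range, nsmul_eq_mul]

private lemma core {n : ℕ} (hn : 2 ≤ n) {ω : ℂ} (hprim : IsPrimitiveRoot ω n)
    (W M : Matrix (Fin n) (Fin n) ℂ)
    (hW1 : W * Wᴴ = 1) (hW2 : Wᴴ * W = 1)
    (hM : M = W * Matrix.diagonal (fun i : Fin n => ω ^ (i : ℕ)) * Wᴴ)
    (hdet : ∀ x y z : ℂ,
      (x • Matrix.diagonal (fun i : Fin n => ω ^ (i : ℕ)) + y • M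
        + z • (Matrix.diagonal (fun i : Fin n => ω ^ (i : ℕ)) * M) - 1).det = 0
        ↔ x ^ n + y ^ n + (-1 : ℂ) ^ (n - 1) * z ^ n = 1)
    (r j : Fin n) : W r j * (starRingEnd ℂ) (W r j) = 1 / n := by
  have hnpos : 0 < n := by omega
  have hn0 : (n : ℂ) ≠ 0 := Nat.cast_ne_zero.mpr hnpos.ne'
  have hω0 : ω ≠ 0 := hprim.ne_zero hnpos.ne'
  set lam : ℂ := ω⁻¹ with hlamdef
  have hlam : IsPrimitiveRoot lam n := hprim.inv
  have hlam0 : lam ≠ 0 := hlam.ne_zero hnpos.ne'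
  set Dm : Matrix (Fin n) (Fin n) ℂ := Matrix.diagonal (fun i : Fin n => ω ^ (i : ℕ)) with hDm
  set Dinv : Matrix (Fin n) (Fin n) ℂ :=
    Matrix.diagonal (fun i : Fin n => lam ^ (i : ℕ)) with hDinvdef
  set Γ : Matrix (Fin n) (Fin n) ℂ :=
    Matrix.diagonal (fun s : Fin n => lam ^ (s : ℕ) - lam ^ (r : ℕ)) with hΓdef
  have hωlam : ∀ i : Fin n, ω ^ (i : ℕ) * lam ^ (i : ℕ) = 1 := by
    intro i; rw [hlamdef, ← mul_pow, mul_inv_cancel₀ hω0, one_pow]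
  have hlampow : (lam ^ (r : ℕ)) ^ n = 1 := by
    rw [← pow_mul, mul_comm, pow_mul, hlam.pow_eq_one, one_pow]
  have hDD : Dm * Dinv = 1 := by
    rw [hDm, hDinvdef, Matrix.diagonal_mul_diagonal,
      show (fun i : Fin n => ω ^ (i : ℕ) * lam ^ (i : ℕ)) = fun _ => (1 : ℂ) from funext hωlam,
      Matrix.diagonal_one]
  have hDmΓ : Dm * Γ = 1 - lam ^ (r : ℕ) • Dm := by
    rw [hDm, hΓdef, Matrix.diagonal_mul_diagonal]
    ext i u
    by_cases h : i = u
    · subst h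
      simp only [Matrix.diagonal_apply_eq, Matrix.sub_apply, Matrix.one_apply_eq,
        Matrix.smul_apply, smul_eq_mul]
      linear_combination hωlam i
    · simp [Matrix.diagonal_apply_ne _ h, Matrix.one_apply_ne h]
  have hdetDm : Dm.det ≠ 0 := by
    rw [hDm, Matrix.det_diagonal]
    exact Finset.prod_ne_zero_iff.mpr fun i _ => pow_ne_zero _ hω0
  have hsign : (-1 : ℂ) ^ (n - 1) * (-1 : ℂ) ^ n = -1 := by
    rw [← pow_add]
    have h2 : n - 1 + n = 2 * (n - 1) + 1 := by omega
    rw [h2, pow_succ, pow_mul, neg_one_sq, one_pow, one_mul]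
  -- the slice identity
  have slice : ∀ x y : ℂ,
      (x • (1 : Matrix (Fin n) (Fin n) ℂ) - (Dinv - y • (Γ * M))).det = x ^ n - 1 := by
    intro x₀ y
    set N : Matrix (Fin n) (Fin n) ℂ := Dinv - y • (Γ * M) with hN
    have hroot : ∀ x : ℂ,
        ((x • (1 : Matrix (Fin n) (Fin n) ℂ) - N).det = 0 ↔ x ^ n = 1) := by
      intro x
      have hkey : Dm * (x • (1 : Matrix (Fin n) (Fin n) ℂ) - N)
          = x • Dm + y • M + (-(lam ^ (r : ℕ) * y)) • (Dm * M) - 1 := by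
        rw [hN, Matrix.mul_sub, Matrix.mul_sub, Matrix.mul_smul, Matrix.mul_smul, mul_one,
          hDD, ← Matrix.mul_assoc, hDmΓ, Matrix.sub_mul, Matrix.smul_mul, one_mul]
        module
      have hz : (-1 : ℂ) ^ (n - 1) * (-(lam ^ (r : ℕ) * y)) ^ n = -(y ^ n) := by
        have hy : (-(lam ^ (r : ℕ) * y)) ^ n = (-1 : ℂ) ^ n * ((lam ^ (r : ℕ)) ^ n * y ^ n) := by
          rw [← neg_one_mul, mul_pow, mul_pow]
        rw [hy, hlampow, one_mul, ← mul_assoc, hsign, neg_one_mul]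
      have h2 := hdet x y (-(lam ^ (r : ℕ) * y))
      rw [hz] at h2
      constructor
      · intro h
        have : (Dm * (x • (1 : Matrix (Fin n) (Fin n) ℂ) - N)).det = 0 := by
          rw [Matrix.det_mul, h, mul_zero]
        rw [hkey] at this
        have := h2.mp this
        linear_combination this
      · intro h
        have hx : x ^ n + y ^ n + -(y^n) = 1 := by rw [h]; ring
        have h3 := h2.mpr hx
        rw [← hkey, Matrix.det_mul] at h3
        exact (mul_eq_zero.mp h3).resolve_left hdetDm
    have hchar : N.charpoly = X ^ n - 1 := by
      apply aux_eq_X_pow_sub_one hnpos hprim _ (Matrix.charpoly_monic N)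
      · rw [Matrix.charpoly_natDegree_eq_dim, Fintype.card_fin]
      · intro i
        rw [aux_charpoly_eval]
        apply (hroot _).mpr
        rw [← pow_mul, mul_comm, pow_mul, hprim.pow_eq_one, one_pow]
    have h5 := congrArg (eval x₀) hchar
    rw [aux_charpoly_eval] at h5
    rw [h5]
    simp
  -- row structure
  have hrowstr : ∀ x y : ℂ,
      (x • (1 : Matrix (Fin n) (Fin n) ℂ) - (Dinv - y • (Γ * M))) r
        = Pi.single r (x - lam ^ (r : ℕ)) := by
    intro x y
    funext t
    have hΓM : (Γ * M) r t = 0 := by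
      rw [hΓdef, Matrix.diagonal_mul]
      simp
    by_cases h : t = r
    · subst h
      simp [Matrix.sub_apply, Matrix.smul_apply, Matrix.one_apply_eq, hΓM,
        hDinvdef, Matrix.diagonal_apply_eq]
    · simp [Matrix.sub_apply, Matrix.smul_apply, hΓM, Matrix.one_apply_ne (Ne.symm h),
        hDinvdef, Matrix.diagonal_apply_ne _ (Ne.symm h), Pi.single_eq_of_ne h]
  set G : ℂ → ℂ → Matrix (Fin n) (Fin n) ℂ := fun x y =>
    Matrix.updateRow (x • (1 : Matrix (Fin n) (Fin n) ℂ) - (Dinv - y • (Γ * M))) r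
      (Pi.single r 1) with hGdef
  have hfac : ∀ x y : ℂ,
      (x • (1 : Matrix (Fin n) (Fin n) ℂ) - (Dinv - y • (Γ * M))).det
        = (x - lam ^ (r : ℕ)) * (G x y).det := by
    intro x y
    have hsingle : (Pi.single r (x - lam ^ (r : ℕ)) : Fin n → ℂ)
        = (x - lam ^ (r : ℕ)) • (Pi.single r 1 : Fin n → ℂ) := by
      funext t
      by_cases h : t = r
      · subst h; simp
      · simp [Pi.single_eq_of_ne h]
    conv_lhs => rw [← Matrix.updateRow_eq_self
      (x • (1 : Matrix (Fin n) (Fin n) ℂ) - (Dinv - y • (Γ * M))) r,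
      hrowstr x y, hsingle, Matrix.det_updateRow_smul]
  have hGdet : ∀ y : ℂ, (G (lam ^ (r : ℕ)) y).det
      = ∏ s ∈ Finset.univ.erase r, (lam ^ (r : ℕ) - lam ^ (s : ℕ)) := by
    intro y
    set F : Matrix (Fin n) (Fin n) ℂ := Dinv - y • (Γ * M) with hF
    set P2 : Matrix (Fin n) (Fin n) (Polynomial ℂ) :=
      Matrix.updateRow ((X : ℂ[X]) • 1 - F.map Polynomial.C) r (Pi.single r 1) with hP2
    have hmap : ∀ x : ℂ, P2.map (eval x) = G x y := by
      intro x
      ext i u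
      rw [Matrix.map_apply]
      by_cases hi : i = r
      · rw [hi, hP2, hGdef]
        simp only [Matrix.updateRow_self]
        by_cases hu : u = r
        · subst hu; simp
        · simp [Pi.single_eq_of_ne hu]
      · rw [hP2, hGdef]
        simp only [Matrix.updateRow_ne hi]
        simp only [Matrix.sub_apply, Matrix.smul_apply, Matrix.map_apply, smul_eq_mul]
        by_cases h : i = u
        · subst h
          simp [Matrix.one_apply_eq, hF, Matrix.sub_apply, Matrix.smul_apply]
        · simp [Matrix.one_apply_ne h, hF, Matrix.sub_apply, Matrix.smul_apply]
    have hdetev : ∀ x : ℂ, eval x P2.det = (G x y).det := by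
      intro x
      have h := RingHom.map_det (Polynomial.evalRingHom x) P2
      rw [RingHom.mapMatrix_apply, Polynomial.coe_evalRingHom] at h
      rw [h, hmap]
    have hpol : ((X : ℂ[X]) - C (lam ^ (r : ℕ))) * P2.det = X ^ n - 1 := by
      apply Polynomial.funext
      intro x
      rw [eval_mul, eval_sub, eval_X, eval_C, hdetev x, ← hfac x y, slice x y]
      simp
    have hfull := aux_prod_X_sub hnpos hlam
    have hsplit := (Finset.mul_prod_erase Finset.univ
      (fun s : Fin n => (X : ℂ[X]) - C (lam ^ (s : ℕ))) (Finset.mem_univ r)).symm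
    have hP2det : P2.det = ∏ s ∈ Finset.univ.erase r, ((X : ℂ[X]) - C (lam ^ (s : ℕ))) := by
      apply mul_left_cancel₀ (X_sub_C_ne_zero (lam ^ (r : ℕ)))
      rw [hpol, ← hfull, hsplit]
    have h9 := congrArg (eval (lam ^ (r : ℕ))) hP2det
    rw [hdetev] at h9
    rw [h9, eval_prod]
    apply Finset.prod_congr rfl
    intro s _
    rw [eval_sub, eval_X, eval_C]
  -- the adjugate diagonal entry
  have hkey2 : ∀ t : ℂ, t ≠ 0 →
      (Matrix.adjugate (t • (1 : Matrix (Fin n) (Fin n) ℂ) - M)) r r = t ^ (n - 1) := by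
    intro t ht
    set T : Matrix (Fin n) (Fin n) ℂ :=
      Matrix.updateRow (t • (1 : Matrix (Fin n) (Fin n) ℂ) - M) r (Pi.single r 1) with hT
    set d : Fin n → ℂ := fun s => if s = r then 1 else (lam ^ (r : ℕ) - lam ^ (s : ℕ)) * t⁻¹
      with hd
    have hGT : G (lam ^ (r : ℕ)) t⁻¹ = Matrix.diagonal d * T := by
      ext i u
      rw [Matrix.diagonal_mul]
      by_cases hi : i = r
      · subst hi
        rw [hGdef, hT]
        simp only [Matrix.updateRow_self, hd, if_pos rfl, one_mul]
      · rw [hGdef, hT]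
        simp only [Matrix.updateRow_ne hi]
        simp only [Matrix.sub_apply, Matrix.smul_apply, smul_eq_mul, hd, if_neg hi]
        have hΓMiu : (Γ * M) i u = (lam ^ (i : ℕ) - lam ^ (r : ℕ)) * M i u := by
          rw [hΓdef, Matrix.diagonal_mul]
        rw [hΓMiu, hDinvdef]
        by_cases h : i = u
        · subst h
          simp only [Matrix.one_apply_eq, Matrix.diagonal_apply_eq]
          field_simp
          ring
        · simp only [Matrix.one_apply_ne h, Matrix.diagonal_apply_ne _ h]
          field_simp
          ring
    have hdetd : (Matrix.diagonal d).det
        = (∏ s ∈ Finset.univ.erase r, (lam ^ (r : ℕ) - lam ^ (s : ℕ))) * (t⁻¹) ^ (n - 1) := by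
      rw [Matrix.det_diagonal, ← Finset.mul_prod_erase _ _ (Finset.mem_univ r)]
      have h1 : d r = 1 := by rw [hd]; simp
      have h2 : ∀ s ∈ Finset.univ.erase r, d s = (lam ^ (r : ℕ) - lam ^ (s : ℕ)) * t⁻¹ := by
        intro s hs; rw [hd]; simp [Finset.ne_of_mem_erase hs]
      rw [h1, one_mul, Finset.prod_congr rfl h2, Finset.prod_mul_distrib, Finset.prod_const,
        Finset.card_erase_of_mem (Finset.mem_univ r), Finset.card_univ, Fintype.card_fin]
    have hprodne : (∏ s ∈ Finset.univ.erase r, (lam ^ (r : ℕ) - lam ^ (s : ℕ))) ≠ 0 := by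
      apply Finset.prod_ne_zero_iff.mpr
      intro s hs hcon
      apply Finset.ne_of_mem_erase hs
      apply Fin.ext
      exact hlam.pow_inj s.isLt r.isLt (by linear_combination -hcon)
    have h6 : (∏ s ∈ Finset.univ.erase r, (lam ^ (r : ℕ) - lam ^ (s : ℕ)))
        = ((∏ s ∈ Finset.univ.erase r, (lam ^ (r : ℕ) - lam ^ (s : ℕ))) * (t⁻¹) ^ (n - 1))
          * T.det := by
      rw [← hdetd, ← Matrix.det_mul, ← hGT, hGdet]
    have h7 : (t ^ (n - 1) : ℂ) ≠ 0 := pow_ne_zero _ ht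
    have h8 : (∏ s ∈ Finset.univ.erase r, (lam ^ (r : ℕ) - lam ^ (s : ℕ)))
        * ((t ^ (n - 1))⁻¹ * T.det)
        = (∏ s ∈ Finset.univ.erase r, (lam ^ (r : ℕ) - lam ^ (s : ℕ))) * 1 := by
      rw [mul_one, ← inv_pow, ← mul_assoc]
      exact h6.symm
    have h9 := mul_left_cancel₀ hprodne h8
    have h10 : T.det = t ^ (n - 1) := ((inv_mul_eq_one₀ h7).mp h9).symm
    rw [Matrix.adjugate_apply]
    exact h10
  -- adjugate via spectral decomposition
  have hadj : ∀ t : ℂ, Matrix.adjugate (t • (1 : Matrix (Fin n) (Fin n) ℂ) - M)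
      = W * Matrix.diagonal (fun jj : Fin n =>
          ∏ i ∈ Finset.univ.erase jj, (t - ω ^ (i : ℕ))) * Wᴴ := by
    intro t
    have hdiag : Matrix.diagonal (fun i : Fin n => t - ω ^ (i : ℕ))
        = t • (1 : Matrix (Fin n) (Fin n) ℂ) - Dm := by
      rw [hDm]
      ext i u
      by_cases h : i = u
      · subst h
        simp [Matrix.diagonal_apply_eq, Matrix.one_apply_eq]
      · simp [Matrix.diagonal_apply_ne _ h, Matrix.one_apply_ne h]
    have hconj : t • (1 : Matrix (Fin n) (Fin n) ℂ) - M
        = W * Matrix.diagonal (fun i : Fin n => t - ω ^ (i : ℕ)) * Wᴴ := by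
      rw [hdiag, hM, Matrix.mul_sub, Matrix.sub_mul, Matrix.mul_smul, mul_one,
        Matrix.smul_mul, hW1]
    have hadjW : W.adjugate = W.det • Wᴴ := by
      calc W.adjugate = W.adjugate * (W * Wᴴ) := by rw [hW1, mul_one]
        _ = (W.adjugate * W) * Wᴴ := by rw [Matrix.mul_assoc]
        _ = W.det • Wᴴ := by rw [Matrix.adjugate_mul, Matrix.smul_mul, one_mul]
    have hadjWH : (Wᴴ).adjugate = (Wᴴ).det • W := by
      calc Wᴴ.adjugate = Wᴴ.adjugate * (Wᴴ * W) := by rw [hW2, mul_one]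
        _ = (Wᴴ.adjugate * Wᴴ) * W := by rw [Matrix.mul_assoc]
        _ = Wᴴ.det • W := by rw [Matrix.adjugate_mul, Matrix.smul_mul, one_mul]
    have hdetprod : Wᴴ.det * W.det = 1 := by rw [← Matrix.det_mul, hW2, Matrix.det_one]
    rw [hconj, Matrix.adjugate_mul_distrib, Matrix.adjugate_mul_distrib, hadjW, hadjWH,
      Matrix.adjugate_diagonal]
    rw [Matrix.mul_smul, Matrix.mul_smul, Matrix.smul_mul, smul_smul,
      mul_comm W.det Wᴴ.det, hdetprod, one_smul, Matrix.mul_assoc]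
  -- the (r,r) entry
  have hentry : ∀ t : ℂ,
      (W * Matrix.diagonal (fun jj : Fin n =>
        ∏ i ∈ Finset.univ.erase jj, (t - ω ^ (i : ℕ))) * Wᴴ) r r
      = ∑ jj : Fin n, (W r jj * (starRingEnd ℂ) (W r jj))
          * ∏ i ∈ Finset.univ.erase jj, (t - ω ^ (i : ℕ)) := by
    intro t
    rw [Matrix.mul_apply]
    apply Finset.sum_congr rfl
    intro jj _
    rw [Matrix.mul_diagonal, Matrix.conjTranspose_apply]
    have : (star (W r jj) : ℂ) = (starRingEnd ℂ) (W r jj) := rfl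
    rw [this]
    ring
  have hsum : ∀ t : ℂ, t ≠ 0 →
      ∑ jj : Fin n, (W r jj * (starRingEnd ℂ) (W r jj))
        * ∏ i ∈ Finset.univ.erase jj, (t - ω ^ (i : ℕ)) = t ^ (n - 1) := by
    intro t ht
    rw [← hentry t, ← hadj t]
    exact hkey2 t ht
  -- promote to polynomial identity
  have hPQ : (∑ jj : Fin n, Polynomial.C (W r jj * (starRingEnd ℂ) (W r jj))
      * ∏ i ∈ Finset.univ.erase jj, ((X : ℂ[X]) - C (ω ^ (i : ℕ))))
      = (X : ℂ[X]) ^ (n - 1) := by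
    apply Polynomial.eq_of_infinite_eval_eq
    apply Set.Infinite.mono (s := {(0 : ℂ)}ᶜ)
    · intro x hx
      have hx0 : x ≠ 0 := hx
      simp only [Set.mem_setOf_eq, eval_finset_sum, eval_mul, eval_C, eval_prod, eval_sub,
        eval_X, eval_pow]
      exact hsum x hx0
    · exact Set.Finite.infinite_compl (Set.finite_singleton 0)
  have hevj := congrArg (eval (ω ^ (j : ℕ))) hPQ
  rw [eval_finset_sum, Finset.sum_eq_single j] at hevj
  · simp only [eval_mul, eval_C, eval_prod, eval_sub, eval_X, eval_pow] at hevj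
    rw [aux_prod_erase hnpos hprim j] at hevj
    have hz : ((ω ^ (j : ℕ)) ^ (n - 1) : ℂ) ≠ 0 := pow_ne_zero _ (pow_ne_zero _ hω0)
    have h11 : (W r j * (starRingEnd ℂ) (W r j) * (n : ℂ)) * (ω ^ (j : ℕ)) ^ (n - 1)
        = 1 * (ω ^ (j : ℕ)) ^ (n - 1) := by
      rw [one_mul]
      calc (W r j * (starRingEnd ℂ) (W r j) * (n : ℂ)) * (ω ^ (j : ℕ)) ^ (n - 1)
          = W r j * (starRingEnd ℂ) (W r j) * ((n : ℂ) * (ω ^ (j : ℕ)) ^ (n - 1)) := by ring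
        _ = (ω ^ (j : ℕ)) ^ (n - 1) := hevj
    have h12 := mul_right_cancel₀ hz h11
    field_simp at h12 ⊢
    linear_combination h12
  · intro b _ hb
    rw [eval_mul, eval_prod]
    rw [Finset.prod_eq_zero (Finset.mem_erase.mpr ⟨Ne.symm hb, Finset.mem_univ j⟩) (by simp)]
    ring
  · simp

theorem stmt_3 (n : ℕ) (hn : 2 ≤ n)
    (ω : ℂ) (hω : ω = Complex.exp (2 * Real.pi * Complex.I / n))
    (A B : Matrix (Fin n) (Fin n) ℂ)
    (hA : A * Aᴴ = Aᴴ * A)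
    (hB : ‖Matrix.toEuclideanCLM (𝕜 := ℂ) B‖ = 1)
    (hspec : {p : ℂ × ℂ × ℂ |
        (p.1 • A + p.2.1 • B + p.2.2 • (A * B) - 1).det = 0} =
      {p : ℂ × ℂ × ℂ |
        p.1 ^ n + p.2.1 ^ n + (-1 : ℂ) ^ (n - 1) * p.2.2 ^ n = 1})
    (e ζ : Fin n → EuclideanSpace ℂ (Fin n))
    (he : Orthonormal ℂ e) (hζ : Orthonormal ℂ ζ)
    (heA : ∀ j : Fin n, Matrix.toEuclideanCLM (𝕜 := ℂ) A (e j) = ω ^ (j : ℕ) • e j)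
    (hζB : ∀ j : Fin n, Matrix.toEuclideanCLM (𝕜 := ℂ) B (ζ j) = ω ^ (j : ℕ) • ζ j)
    (C : Matrix (Fin n) (Fin n) ℂ)
    (hC : C = Matrix.of (fun r j : Fin n =>
      (Real.sqrt n : ℂ) * (inner ℂ (e r) (ζ j) : ℂ))) :
    (∀ r j : Fin n, ‖(inner ℂ (e r) (ζ j) : ℂ)‖ = 1 / Real.sqrt n) ∧
    (∀ r j : Fin n, ‖C r j‖ = 1) ∧
    C * Cᴴ = (n : ℂ) • (1 : Matrix (Fin n) (Fin n) ℂ) := by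

  have hprim : IsPrimitiveRoot ω n := by
    rw [hω]; exact Complex.isPrimitiveRoot_exp n (by omega)
  set Dm : Matrix (Fin n) (Fin n) ℂ := Matrix.diagonal (fun i : Fin n => ω ^ (i : ℕ)) with hDm
  set U : Matrix (Fin n) (Fin n) ℂ := Matrix.of (fun i k : Fin n => e k i) with hU
  set V : Matrix (Fin n) (Fin n) ℂ := Matrix.of (fun i k : Fin n => ζ k i) with hV
  have hunit : ∀ (P : Matrix (Fin n) (Fin n) ℂ) (v : Fin n → EuclideanSpace ℂ (Fin n)),
      Orthonormal ℂ v → P = Matrix.of (fun i k : Fin n => v k i) → Pᴴ * P = 1 := by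
    intro P v hv hP
    ext a b
    rw [Matrix.mul_apply, Matrix.one_apply]
    have h1 := orthonormal_iff_ite.mp hv a b
    rw [PiLp.inner_apply] at h1
    simp only [RCLike.inner_apply] at h1
    rw [← h1]
    apply Finset.sum_congr rfl
    intro l _
    rw [hP, Matrix.conjTranspose_apply, Matrix.of_apply, Matrix.of_apply]
    exact mul_comm _ _
  have hUU : Uᴴ * U = 1 := hunit U e he hU
  have hVV : Vᴴ * V = 1 := hunit V ζ hζ hV
  have hUU' : U * Uᴴ = 1 := mul_eq_one_comm.mp hUU
  have hVV' : V * Vᴴ = 1 := mul_eq_one_comm.mp hVV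
  have hmv : ∀ (P : Matrix (Fin n) (Fin n) ℂ) (v : Fin n → EuclideanSpace ℂ (Fin n)),
      (∀ k : Fin n, Matrix.toEuclideanCLM (𝕜 := ℂ) P (v k) = ω ^ (k : ℕ) • v k) →
      P * Matrix.of (fun i k : Fin n => v k i) = Matrix.of (fun i k : Fin n => v k i) * Dm := by
    intro P v hv
    ext i k
    rw [Matrix.mul_apply, hDm, Matrix.mul_diagonal, Matrix.of_apply]
    have h := congrArg (WithLp.ofLp) (hv k)
    rw [Matrix.ofLp_toEuclideanCLM] at h
    have h2 := congrFun h i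
    have h3 : P.mulVec (WithLp.ofLp (v k)) i = ∑ l, P i l * v k l := rfl
    rw [h3] at h2
    rw [WithLp.ofLp_smul] at h2
    have h4 : (ω ^ (k : ℕ) • WithLp.ofLp (v k)) i = ω ^ (k : ℕ) * v k i := rfl
    rw [h4] at h2
    simp only [Matrix.of_apply]
    rw [h2, mul_comm]
  have hAU : A * U = U * Dm := hmv A e heA
  have hBV : B * V = V * Dm := hmv B ζ hζB
  have hAeq : A = U * Dm * Uᴴ := by
    calc A = A * (U * Uᴴ) := by rw [hUU', mul_one]
      _ = (A * U) * Uᴴ := by rw [Matrix.mul_assoc]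
      _ = U * Dm * Uᴴ := by rw [hAU]
  have hBeq : B = V * Dm * Vᴴ := by
    calc B = B * (V * Vᴴ) := by rw [hVV', mul_one]
      _ = (B * V) * Vᴴ := by rw [Matrix.mul_assoc]
      _ = V * Dm * Vᴴ := by rw [hBV]
  set W : Matrix (Fin n) (Fin n) ℂ := Uᴴ * V with hWdef
  set M0 : Matrix (Fin n) (Fin n) ℂ := Uᴴ * B * U with hM0def
  have hW1 : W * Wᴴ = 1 := by
    rw [hWdef, Matrix.conjTranspose_mul, Matrix.conjTranspose_conjTranspose]
    calc Uᴴ * V * (Vᴴ * U) = Uᴴ * ((V * Vᴴ) * U) := by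
          simp only [Matrix.mul_assoc]
      _ = 1 := by rw [hVV', one_mul, hUU]
  have hW2 : Wᴴ * W = 1 := mul_eq_one_comm.mp hW1
  have hM0W : M0 = W * Dm * Wᴴ := by
    rw [hM0def, hBeq, hWdef, Matrix.conjTranspose_mul, Matrix.conjTranspose_conjTranspose]
    simp only [Matrix.mul_assoc]
  have hUMU : U * M0 * Uᴴ = B := by
    rw [hM0def]
    calc U * (Uᴴ * B * U) * Uᴴ = (U * Uᴴ) * (B * ((U * Uᴴ))) := by
          simp only [Matrix.mul_assoc]
      _ = B := by rw [hUU', one_mul, mul_one]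
  have hADM : U * (Dm * M0) * Uᴴ = A * B := by
    rw [hAeq, ← hUMU]
    have h1 : (U * Dm * Uᴴ) * (U * M0 * Uᴴ) = U * Dm * ((Uᴴ * U) * (M0 * Uᴴ)) := by
      simp only [Matrix.mul_assoc]
    rw [h1, hUU, one_mul]
    simp only [Matrix.mul_assoc]
  have hpencil : ∀ x y z : ℂ,
      U * (x • Dm + y • M0 + z • (Dm * M0) - 1) * Uᴴ
        = x • A + y • B + z • (A * B) - 1 := by
    intro x y z
    rw [Matrix.mul_sub, Matrix.sub_mul, Matrix.mul_add, Matrix.add_mul, Matrix.mul_add,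
      Matrix.add_mul, mul_one, hUU']
    rw [Matrix.mul_smul, Matrix.smul_mul, Matrix.mul_smul, Matrix.smul_mul,
      Matrix.mul_smul, Matrix.smul_mul]
    rw [hUMU, hADM, ← hAeq]
  have hdetconj : ∀ Z : Matrix (Fin n) (Fin n) ℂ, (U * Z * Uᴴ).det = Z.det := by
    intro Z
    rw [Matrix.det_mul, Matrix.det_mul]
    have h1 : U.det * Uᴴ.det = 1 := by rw [← Matrix.det_mul, hUU', Matrix.det_one]
    calc U.det * Z.det * Uᴴ.det = Z.det * (U.det * Uᴴ.det) := by ring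
      _ = Z.det := by rw [h1, mul_one]
  have hdet0 : ∀ x y z : ℂ,
      (x • Dm + y • M0 + z • (Dm * M0) - 1).det = 0
        ↔ x ^ n + y ^ n + (-1 : ℂ) ^ (n - 1) * z ^ n = 1 := by
    intro x y z
    have hs := Set.ext_iff.mp hspec (x, y, z)
    simp only [Set.mem_setOf_eq] at hs
    rw [← hdetconj (x • Dm + y • M0 + z • (Dm * M0) - 1), hpencil x y z]
    exact hs
  have hval : ∀ r j : Fin n, W r j * (starRingEnd ℂ) (W r j) = 1 / n := fun r j =>
    core hn hprim W M0 hW1 hW2 hM0W hdet0 r j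
  have hWin : ∀ r j : Fin n, W r j = (inner ℂ (e r) (ζ j) : ℂ) := by
    intro r j
    rw [hWdef, Matrix.mul_apply, PiLp.inner_apply]
    simp only [RCLike.inner_apply]
    apply Finset.sum_congr rfl
    intro l _
    rw [Matrix.conjTranspose_apply, hU, hV, Matrix.of_apply, Matrix.of_apply]
    exact mul_comm _ _
  have hinner : ∀ r j : Fin n,
      (inner ℂ (e r) (ζ j) : ℂ) * (starRingEnd ℂ) (inner ℂ (e r) (ζ j) : ℂ) = 1 / n := by
    intro r j
    rw [← hWin r j]
    exact hval r j
  have hnR : (0 : ℝ) < n := by positivity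
  have hsqrt0 : Real.sqrt n ≠ 0 := by
    refine Real.sqrt_ne_zero'.mpr ?_
    exact_mod_cast hnR
  have habs : ∀ r j : Fin n, ‖(inner ℂ (e r) (ζ j) : ℂ)‖ = 1 / Real.sqrt n := by
    intro r j
    have h := hinner r j
    rw [Complex.mul_conj] at h
    have hreal : Complex.normSq (inner ℂ (e r) (ζ j) : ℂ) = 1 / (n : ℝ) := by
      rw [show ((1 : ℂ) / n) = (((1 / n : ℝ)) : ℂ) by push_cast; ring] at h
      exact_mod_cast h
    rw [Complex.norm_def, hreal, one_div, one_div, Real.sqrt_inv]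
  refine ⟨habs, ?_, ?_⟩
  · intro r j
    rw [hC]
    simp only [Matrix.of_apply]
    rw [norm_mul, habs r j]
    have h5 : ‖((Real.sqrt n : ℝ) : ℂ)‖ = Real.sqrt n := by
      simp
    rw [h5]
    field_simp
  · have hCW : C = ((Real.sqrt n : ℝ) : ℂ) • W := by
      rw [hC]
      ext a b
      simp only [Matrix.of_apply, Matrix.smul_apply, smul_eq_mul]
      rw [hWin a b]
    rw [hCW, Matrix.conjTranspose_smul, Matrix.smul_mul, Matrix.mul_smul, smul_smul, hW1]
    have h6 : ((Real.sqrt n : ℝ) : ℂ) * star ((Real.sqrt n : ℝ) : ℂ) = (n : ℂ) := by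
      rw [Complex.star_def, Complex.conj_ofReal, ← Complex.ofReal_mul,
        Real.mul_self_sqrt (le_of_lt hnR)]
      norm_num
    rw [h6]
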